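/- Let D=(V,A) be a digraph and σ a permutation of V. Set φ(σ) := ∑ (ℓ(γ)−1), summed over those cycles γ of σ that are D-cycles. Then ∑_F (−1)^{|F|}, summed over all linear subsets F of A_σ ∩ A, equals (−1)^{φ(σ)} if σ ∈ S_V(D,D̄), and equals 0 otherwise. -/

import Mathlib

open scoped Classical

noncomputable section

/-- The power sum `p_k = x_1^k + x_2^k + ⋯` as a formal power series over `R`
in countably many variables indexed by the positive integers. -/
def pSumR (R : Type) [CommRing R] (k : ℕ) : MvPowerSeries ℕ+ R :=
  fun d => if ∃ i : ℕ+, d = Finsupp.single i k then 1 else 0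

/-- The power sum `p_k` over `ℤ`. -/
def pSum (k : ℕ) : MvPowerSeries ℕ+ ℤ := pSumR ℤ k

/-- The fundamental quasisymmetric function `L_{I,n}` (with positions 0-indexed):
its coefficient at a monomial `d` is the number of weakly increasing `n`-tuples
`(i_0, …, i_{n-1})` of positive integers, strictly increasing at the positions in `I`,
whose associated monomial `x_{i_0} ⋯ x_{i_{n-1}}` is `d`. -/
def Lfun (n : ℕ) (I : Set ℕ) : MvPowerSeries ℕ+ ℤ :=
  fun d =>
    ((Set.ncard {i : Fin n → ℕ+ |
        Monotone i ∧
        (∀ (p : ℕ) (h : p + 1 < n), p ∈ I → i ⟨p, Nat.lt_of_succ_lt h⟩ < i ⟨p + 1, h⟩) ∧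
        (∑ k : Fin n, Finsupp.single (i k) 1) = d}) : ℤ)

/-- The descent set `Des(w, D)` (0-indexed) of the `V`-listing `w = (e 0, e 1, …, e (n-1))`
with respect to the digraph with arc set `A`. -/
def descents {V : Type} (A : Set (V × V)) {n : ℕ} (e : Fin n ≃ V) : Set ℕ :=
  {p | ∃ h : p + 1 < n, (e ⟨p, Nat.lt_of_succ_lt h⟩, e ⟨p + 1, h⟩) ∈ A}

/-- The Redei–Berge symmetric function `U_D` of the digraph `D = (V, A)`. -/
def redeiBerge (V : Type) [Fintype V] [DecidableEq V] (A : Set (V × V)) :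
    MvPowerSeries ℕ+ ℤ :=
  ∑ e : Fin (Fintype.card V) ≃ V, Lfun (Fintype.card V) (descents A e)

/-- The cycles of a permutation `σ`, each represented by its set of entries
(i.e. by the corresponding orbit of `σ`). -/
def cyclesOf {V : Type} [Fintype V] [DecidableEq V] (σ : Equiv.Perm V) :
    Finset (Finset V) :=
  Finset.univ.image fun v => Finset.univ.filter fun u => σ.SameCycle v u

/-- `p_{type σ}`: the product of `p_{ℓ(γ)}` over all cycles `γ` of `σ`. -/
def pType {V : Type} [Fintype V] [DecidableEq V] (σ : Equiv.Perm V) :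
    MvPowerSeries ℕ+ ℤ :=
  ∏ O ∈ cyclesOf σ, pSum O.card

/-- `φ(σ) = ∑ (ℓ(γ) - 1)`, summed over all cycles `γ` of `σ` that are `D`-cycles.
A cycle of `σ` with orbit `O` is a `D`-cycle iff all its cyclic arcs `(u, σ u)`
(for `u ∈ O`) lie in `A`. -/
def phi {V : Type} [Fintype V] [DecidableEq V] (A : Set (V × V)) (σ : Equiv.Perm V) : ℕ :=
  ∑ O ∈ (cyclesOf σ).filter (fun O => ∀ u ∈ O, (u, σ u) ∈ A), (O.card - 1)

/-- `σ ∈ S_V(D, D̄)`: each cycle of `σ` is a `D`-cycle or a `D̄`-cycle. -/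
def memSVDDbar {V : Type} [Fintype V] [DecidableEq V] (A : Set (V × V))
    (σ : Equiv.Perm V) : Prop :=
  ∀ O ∈ cyclesOf σ, (∀ u ∈ O, (u, σ u) ∈ A) ∨ (∀ u ∈ O, (u, σ u) ∉ A)

/-- `σ ∈ S_V(D)`: each nontrivial cycle of `σ` is a `D`-cycle. -/
def memSVD {V : Type} [Fintype V] [DecidableEq V] (A : Set (V × V))
    (σ : Equiv.Perm V) : Prop :=
  ∀ O ∈ cyclesOf σ, 1 < O.card → ∀ u ∈ O, (u, σ u) ∈ A

/-- `ψ(σ)`: the number of nontrivial cycles of `σ`. -/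
def psi {V : Type} [Fintype V] [DecidableEq V] (σ : Equiv.Perm V) : ℕ :=
  ((cyclesOf σ).filter fun O => 1 < O.card).card

/-- The digraph `(V, A)` is a tournament: no loops, and for any two distinct vertices
`u, v`, exactly one of `(u,v)` and `(v,u)` is an arc. -/
def IsTournament {V : Type} (A : Set (V × V)) : Prop :=
  (∀ u : V, (u, u) ∉ A) ∧ ∀ u v : V, u ≠ v → Xor' ((u, v) ∈ A) ((v, u) ∈ A)

/-- The number of Hamiltonian paths of the digraph `(W, B)` (the empty list counts
as a Hamiltonian path when `W` is empty). -/
def hampCount (W : Type) [Fintype W] (B : Set (W × W)) : ℕ :=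
  Set.ncard {w : List W | w.Nodup ∧ (∀ x : W, x ∈ w) ∧ w.Chain' fun a b => (a, b) ∈ B}

/-- `A_σ = {(v, σ v) : v ∈ V}`. -/
def ApermSet {V : Type} (σ : Equiv.Perm V) : Set (V × V) :=
  Set.range fun v => (v, σ v)

/-- The arc set of a tuple (encoded as a list): the set of its consecutive pairs. -/
def arcsList {V : Type} (p : List V) : Set (V × V) := {a | a ∈ p.zip p.tail}

/-- `C` is a path cover of `V`: a set of paths of `V` (nonempty tuples of distinct
elements) such that each element of `V` belongs to exactly one of these paths. -/
def IsPathCover (V : Type) (C : Set (List V)) : Prop :=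
  (∀ p ∈ C, p ≠ [] ∧ p.Nodup) ∧ ∀ v : V, ∃! p, p ∈ C ∧ v ∈ p

/-- The arc set of a path cover. -/
def arcsCover {V : Type} (C : Set (List V)) : Set (V × V) :=
  ⋃ p ∈ C, arcsList p

/-- A subset `F ⊆ V × V` is linear if it is the arc set of some path cover of `V`. -/
def IsLinear (V : Type) (F : Set (V × V)) : Prop :=
  ∃ C : Set (List V), IsPathCover V C ∧ F = arcsCover C


set_option linter.unusedSectionVars false

section AuxRB

lemma mem_zip_tail {α : Type*} {l : List α} {a : α × α} :
    a ∈ l.zip l.tail ↔ ∃ i, ∃ h : i + 1 < l.length, l[i] = a.1 ∧ l[i+1] = a.2 := by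
  rw [List.mem_iff_getElem]
  constructor
  · rintro ⟨i, hi, he⟩
    rw [List.length_zip, List.length_tail] at hi
    have h1 : i + 1 < l.length := by omega
    refine ⟨i, h1, ?_, ?_⟩
    · rw [← he, List.getElem_zip]
    · rw [← he, List.getElem_zip, List.getElem_tail]
  · rintro ⟨i, h1, ha, hb⟩
    have hi : i < (l.zip l.tail).length := by
      rw [List.length_zip, List.length_tail]; omega
    refine ⟨i, hi, ?_⟩
    rw [List.getElem_zip, List.getElem_tail, ha, hb]

variable {V : Type} [Fintype V] [DecidableEq V]

lemma pow_inv_pow_apply (σ : Equiv.Perm V) {a b : ℕ} (hab : a ≤ b) (v : V) :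
    (σ ^ a) ((σ⁻¹ ^ b) v) = (σ⁻¹ ^ (b - a)) v := by
  have h : σ ^ a * σ⁻¹ ^ b = σ⁻¹ ^ (b - a) := by
    have : σ⁻¹ ^ b = σ⁻¹ ^ a * σ⁻¹ ^ (b - a) := by rw [← pow_add]; congr 1; omega
    rw [this, ← mul_assoc, inv_pow, mul_inv_cancel, one_mul]
  calc (σ ^ a) ((σ⁻¹ ^ b) v) = (σ ^ a * σ⁻¹ ^ b) v := rfl
    _ = (σ⁻¹ ^ (b - a)) v := by rw [h]

lemma inv_pow_pow_apply (σ : Equiv.Perm V) {a b : ℕ} (hab : a ≤ b) (v : V) :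
    (σ⁻¹ ^ a) ((σ ^ b) v) = (σ ^ (b - a)) v := by
  have h : σ⁻¹ ^ a * σ ^ b = σ ^ (b - a) := by
    have : σ ^ b = σ ^ a * σ ^ (b - a) := by rw [← pow_add]; congr 1; omega
    rw [this, ← mul_assoc, inv_pow, inv_mul_cancel, one_mul]
  calc (σ⁻¹ ^ a) ((σ ^ b) v) = (σ⁻¹ ^ a * σ ^ b) v := rfl
    _ = (σ ^ (b - a)) v := by rw [h]

lemma exists_inv_pow (σ : Equiv.Perm V) (S : Finset V) (v : V)
    (h : ∃ k : ℕ, (σ ^ k) v ∉ S) : ∃ k : ℕ, (σ⁻¹ ^ (k + 1)) v ∉ S := by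
  obtain ⟨j, hj⟩ := h
  have hM : j + 1 ≤ orderOf σ * (j + 1) := Nat.le_mul_of_pos_left _ (orderOf_pos σ)
  refine ⟨orderOf σ * (j + 1) - j - 1, ?_⟩
  have he : orderOf σ * (j + 1) - j - 1 + 1 = orderOf σ * (j + 1) - j := by omega
  rw [he]
  have hmul : σ ^ j * σ ^ (orderOf σ * (j + 1) - j) = 1 := by
    rw [← pow_add]
    have : j + (orderOf σ * (j + 1) - j) = orderOf σ * (j + 1) := by omega
    rw [this, pow_mul, pow_orderOf_eq_one, one_pow]
  have hinv : σ⁻¹ ^ (orderOf σ * (j + 1) - j) = σ ^ j := by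
    rw [inv_pow]; exact inv_eq_of_mul_eq_one_left hmul
  rw [hinv]; exact hj

def nF (σ : Equiv.Perm V) (S : Finset V) (v : V) : ℕ :=
  if h : ∃ k : ℕ, (σ ^ k) v ∉ S then Nat.find h else 0

def mF (σ : Equiv.Perm V) (S : Finset V) (v : V) : ℕ :=
  if h : ∃ k : ℕ, (σ⁻¹ ^ (k + 1)) v ∉ S then Nat.find h else 0

def startF (σ : Equiv.Perm V) (S : Finset V) (v : V) : V := (σ⁻¹ ^ mF σ S v) v

def pthF (σ : Equiv.Perm V) (S : Finset V) (v : V) : List V :=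
  (List.range (nF σ S v + 1)).map fun k => (σ ^ k) v

section Specs
variable {σ : Equiv.Perm V} {S : Finset V} {v : V}

lemma nF_spec (h : ∃ k : ℕ, (σ ^ k) v ∉ S) : (σ ^ nF σ S v) v ∉ S := by
  rw [nF, dif_pos h]; exact Nat.find_spec h

lemma nF_min (h : ∃ k : ℕ, (σ ^ k) v ∉ S) {k : ℕ} (hk : k < nF σ S v) : (σ ^ k) v ∈ S := by
  rw [nF, dif_pos h] at hk
  by_contra hc; exact Nat.find_min h hk hc

lemma nF_le (h : ∃ k : ℕ, (σ ^ k) v ∉ S) {k : ℕ} (hk : (σ ^ k) v ∉ S) : nF σ S v ≤ k := by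
  rw [nF, dif_pos h]; exact Nat.find_le hk

lemma mF_spec (h : ∃ k : ℕ, (σ⁻¹ ^ (k + 1)) v ∉ S) : (σ⁻¹ ^ (mF σ S v + 1)) v ∉ S := by
  rw [mF, dif_pos h]; exact Nat.find_spec h

lemma mF_min (h : ∃ k : ℕ, (σ⁻¹ ^ (k + 1)) v ∉ S) {k : ℕ} (hk : k < mF σ S v) :
    (σ⁻¹ ^ (k + 1)) v ∈ S := by
  rw [mF, dif_pos h] at hk
  by_contra hc; exact Nat.find_min h hk hc

lemma mF_eq (h : ∃ k : ℕ, (σ⁻¹ ^ (k + 1)) v ∉ S) {i : ℕ}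
    (h1 : (σ⁻¹ ^ (i + 1)) v ∉ S) (h2 : ∀ k < i, (σ⁻¹ ^ (k + 1)) v ∈ S) :
    mF σ S v = i := by
  rw [mF, dif_pos h, Nat.find_eq_iff]
  exact ⟨h1, fun k hk hc => hc (h2 k hk)⟩

lemma pthF_length : (pthF σ S v).length = nF σ S v + 1 := by simp [pthF]

lemma pthF_getElem {i : ℕ} (hi : i < (pthF σ S v).length) :
    (pthF σ S v)[i] = (σ ^ i) v := by
  simp [pthF]

lemma mem_pthF {u : V} : u ∈ pthF σ S v ↔ ∃ k ≤ nF σ S v, (σ ^ k) v = u := by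
  simp only [pthF, List.mem_map, List.mem_range]
  constructor
  · rintro ⟨k, hk, rfl⟩; exact ⟨k, by omega, rfl⟩
  · rintro ⟨k, hk, rfl⟩; exact ⟨k, by omega, rfl⟩

end Specs

section Main
variable (σ : Equiv.Perm V) (S : Finset V)

lemma startF_inv_not_mem (h : ∀ v : V, ∃ k : ℕ, (σ ^ k) v ∉ S) (v : V) :
    σ⁻¹ (startF σ S v) ∉ S := by
  have hm := mF_spec (exists_inv_pow σ S v (h v))
  have : σ⁻¹ (startF σ S v) = (σ⁻¹ ^ (mF σ S v + 1)) v := by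
    rw [startF, pow_succ']; rfl
  rwa [this]

lemma pow_startF (v : V) : (σ ^ mF σ S v) (startF σ S v) = v := by
  rw [startF, pow_inv_pow_apply σ le_rfl, Nat.sub_self, pow_zero]; rfl

lemma mF_le_nF_startF (h : ∀ v : V, ∃ k : ℕ, (σ ^ k) v ∉ S) (v : V) :
    mF σ S v ≤ nF σ S (startF σ S v) := by
  rw [nF, dif_pos (h _), Nat.le_find_iff]
  intro k hk hc
  apply hc
  have : (σ ^ k) (startF σ S v) = (σ⁻¹ ^ (mF σ S v - k)) v := by
    rw [startF, pow_inv_pow_apply σ (le_of_lt hk)]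
  rw [this]
  have he : mF σ S v - k = (mF σ S v - k - 1) + 1 := by omega
  rw [he]
  exact mF_min (exists_inv_pow σ S v (h v)) (by omega)

lemma mem_pthF_startF (h : ∀ v : V, ∃ k : ℕ, (σ ^ k) v ∉ S) (v : V) :
    v ∈ pthF σ S (startF σ S v) :=
  mem_pthF.2 ⟨mF σ S v, mF_le_nF_startF σ S h v, pow_startF σ S v⟩

lemma startF_of_mem (h : ∀ v : V, ∃ k : ℕ, (σ ^ k) v ∉ S) (u v : V)
    (hv : v ∈ pthF σ S (startF σ S u)) :
    startF σ S v = startF σ S u ∧ mF σ S v ≤ nF σ S (startF σ S u) := by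
  obtain ⟨i, hi, hiv⟩ := mem_pthF.1 hv
  set w := startF σ S u with hw
  have hwin : (σ⁻¹ ^ i) v = w := by
    rw [← hiv, inv_pow_pow_apply σ le_rfl, Nat.sub_self, pow_zero]; rfl
  have hmv : mF σ S v = i := by
    apply mF_eq (exists_inv_pow σ S v (h v))
    · have : (σ⁻¹ ^ (i + 1)) v = σ⁻¹ w := by
        rw [pow_succ']
        have : (σ⁻¹ * σ⁻¹ ^ i) v = σ⁻¹ ((σ⁻¹ ^ i) v) := rfl
        rw [this, hwin]
      rw [this]
      exact startF_inv_not_mem σ S h u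
    · intro k hk
      have : (σ⁻¹ ^ (k + 1)) v = (σ ^ (i - (k + 1))) w := by
        rw [← hiv, inv_pow_pow_apply σ (by omega)]
      rw [this]
      exact nF_min (h w) (by omega)
  constructor
  · rw [startF, hmv, hwin]
  · rw [hmv]; exact hi

lemma pthF_nodup (h : ∀ v : V, ∃ k : ℕ, (σ ^ k) v ∉ S) (v : V) :
    (pthF σ S (startF σ S v)).Nodup := by
  set w := startF σ S v with hw
  rw [pthF]
  refine List.Nodup.map_on ?_ List.nodup_range
  intro i hi j hj hij
  simp only [List.mem_range] at hi hj
  by_contra hne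
  -- wlog i < j
  rcases Nat.lt_or_ge i j with hlt | hge
  case _ =>
    have key : ∀ i j : ℕ, i < j → j ≤ nF σ S w → (σ ^ i) w = (σ ^ j) w → False := by
      intro i j hij hj heq
      have hd : (σ ^ (j - i)) w = w := by
        have := congrArg (σ⁻¹ ^ i) heq
        rw [inv_pow_pow_apply σ le_rfl, Nat.sub_self, pow_zero,
          inv_pow_pow_apply σ (le_of_lt hij), Equiv.Perm.one_apply] at this
        exact this.symm
      have h2 : (σ ^ (j - i - 1)) w = σ⁻¹ w := by
        have h3 := inv_pow_pow_apply σ (a := 1) (b := j - i) (by omega) w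
        rw [hd] at h3
        have : j - i - 1 = j - i - 1 := rfl
        rw [← h3, pow_one]
      have hmem : (σ ^ (j - i - 1)) w ∈ S := nF_min (h w) (by omega)
      rw [h2] at hmem
      exact startF_inv_not_mem σ S h v hmem
    exact key i j hlt (by omega) hij
  case _ =>
    have hlt : j < i := by omega
    have key : ∀ i j : ℕ, i < j → j ≤ nF σ S w → (σ ^ i) w = (σ ^ j) w → False := by
      intro i j hij hj heq
      have hd : (σ ^ (j - i)) w = w := by
        have := congrArg (σ⁻¹ ^ i) heq
        rw [inv_pow_pow_apply σ le_rfl, Nat.sub_self, pow_zero,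
          inv_pow_pow_apply σ (le_of_lt hij), Equiv.Perm.one_apply] at this
        exact this.symm
      have h2 : (σ ^ (j - i - 1)) w = σ⁻¹ w := by
        have h3 := inv_pow_pow_apply σ (a := 1) (b := j - i) (by omega) w
        rw [hd] at h3
        rw [← h3, pow_one]
      have hmem : (σ ^ (j - i - 1)) w ∈ S := nF_min (h w) (by omega)
      rw [h2] at hmem
      exact startF_inv_not_mem σ S h v hmem
    exact key j i hlt (by omega) hij.symm

end Main

lemma linear_iff (σ : Equiv.Perm V) (S : Finset V) :
    IsLinear V ((S.image fun v => (v, σ v) : Finset (V × V)) : Set (V × V)) ↔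
      ∀ v : V, ∃ k : ℕ, (σ ^ k) v ∉ S := by
  constructor
  · rintro ⟨C, ⟨hCne, hCu⟩, hCa⟩
    intro v
    by_contra hc
    push_neg at hc
    obtain ⟨p, ⟨hpC, hvp⟩, hpu⟩ := hCu v
    obtain ⟨i₀, hi₀, hget⟩ := List.mem_iff_getElem.1 hvp
    have claim : ∀ k : ℕ, ∃ h : i₀ + k < p.length, p[i₀ + k] = (σ ^ k) v := by
      intro k
      induction k with
      | zero => exact ⟨by omega, by simpa using hget⟩
      | succ k ih =>
        obtain ⟨hk, hk2⟩ := ih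
        set u := (σ ^ k) v with hu
        have huS : u ∈ S := hc k
        have harc : ((u, σ u) : V × V) ∈ arcsCover C := by
          rw [← hCa]
          simp only [Finset.coe_image, Set.mem_image, Finset.mem_coe]
          exact ⟨u, huS, rfl⟩
        simp only [arcsCover, Set.mem_iUnion, arcsList, Set.mem_setOf_eq] at harc
        obtain ⟨q, hqC, hq⟩ := harc
        obtain ⟨j, hj, hj1, hj2⟩ := mem_zip_tail.1 hq
        have huq : u ∈ q := List.mem_iff_getElem.2 ⟨j, by omega, hj1⟩
        have hup : u ∈ p := List.mem_iff_getElem.2 ⟨i₀ + k, hk, hk2⟩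
        obtain ⟨r, -, hru⟩ := hCu u
        have hqp : q = p := (hru q ⟨hqC, huq⟩).trans (hru p ⟨hpC, hup⟩).symm
        subst hqp
        have hnd := (hCne q hpC).2
        have hji : j = i₀ + k :=
          (hnd.getElem_inj_iff (hi := by omega) (hj := hk)).1 (hj1.trans hk2.symm)
        subst hji
        refine ⟨by omega, ?_⟩
        have hs : (σ ^ (k + 1)) v = σ u := by
          rw [hu, pow_succ']; rfl
        rw [hs]
        exact hj2
    obtain ⟨hlt, -⟩ := claim p.length
    omega
  · intro h
    refine ⟨Set.range fun v => pthF σ S (startF σ S v), ⟨?_, ?_⟩, ?_⟩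
    · rintro p ⟨v, rfl⟩
      constructor
      · intro hemp
        have := congrArg List.length hemp
        simp [pthF_length] at this
      · exact pthF_nodup σ S h v
    · intro v
      refine ⟨pthF σ S (startF σ S v), ⟨⟨v, rfl⟩, mem_pthF_startF σ S h v⟩, ?_⟩
      rintro q ⟨⟨u, rfl⟩, hvq⟩
      show pthF σ S (startF σ S u) = pthF σ S (startF σ S v)
      rw [(startF_of_mem σ S h u v hvq).1]
    · ext a
      simp only [arcsCover, Set.mem_iUnion, arcsList, Set.mem_setOf_eq, Finset.coe_image,
        Set.mem_image, Finset.mem_coe]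
      constructor
      · rintro ⟨v, hv, rfl⟩
        refine ⟨pthF σ S (startF σ S v), ⟨v, rfl⟩, ?_⟩
        have hle := mF_le_nF_startF σ S h v
        have hmlt : mF σ S v < nF σ S (startF σ S v) := by
          rcases Nat.lt_or_ge (mF σ S v) (nF σ S (startF σ S v)) with h1 | h1
          · exact h1
          · exfalso
            have heq : mF σ S v = nF σ S (startF σ S v) := by omega
            have := nF_spec (h (startF σ S v))
            rw [← heq, pow_startF] at this
            exact this hv
        rw [mem_zip_tail]
        refine ⟨mF σ S v, by rw [pthF_length]; omega, ?_, ?_⟩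
        · rw [pthF_getElem]; exact pow_startF σ S v
        · rw [pthF_getElem]
          show (σ ^ (mF σ S v + 1)) (startF σ S v) = σ v
          rw [pow_succ']
          show σ ((σ ^ mF σ S v) (startF σ S v)) = σ v
          rw [pow_startF]
      · rintro ⟨p, ⟨v, rfl⟩, ha⟩
        rw [mem_zip_tail] at ha
        obtain ⟨i, hi, h1, h2⟩ := ha
        rw [pthF_length] at hi
        rw [pthF_getElem (by rw [pthF_length]; omega)] at h1
        rw [pthF_getElem (by rw [pthF_length]; omega)] at h2
        refine ⟨a.1, ?_, ?_⟩
        · rw [← h1]; exact nF_min (h _) (by omega)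
        · have h3 : a.2 = σ a.1 := by
            rw [← h1, ← h2, pow_succ']; rfl
          obtain ⟨a1, a2⟩ := a
          simp only at h3 ⊢
          rw [h3]


section AuxOrbits
variable {V : Type} [Fintype V] [DecidableEq V]

lemma orbit_mem_cyclesOf (σ : Equiv.Perm V) (v : V) :
    (Finset.univ.filter fun u => σ.SameCycle v u) ∈ cyclesOf σ :=
  Finset.mem_image_of_mem _ (Finset.mem_univ v)

lemma self_mem_orbit (σ : Equiv.Perm V) (v : V) :
    v ∈ Finset.univ.filter fun u => σ.SameCycle v u := by
  simp [Equiv.Perm.SameCycle.refl]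

lemma cyclesOf_nonempty {σ : Equiv.Perm V} {O : Finset V} (hO : O ∈ cyclesOf σ) :
    O.Nonempty := by
  obtain ⟨v, -, rfl⟩ := Finset.mem_image.1 hO
  exact ⟨v, self_mem_orbit σ v⟩

lemma cyclesOf_eq_of_mem {σ : Equiv.Perm V} {O O' : Finset V} (hO : O ∈ cyclesOf σ)
    (hO' : O' ∈ cyclesOf σ) {u : V} (hu : u ∈ O) (hu' : u ∈ O') : O = O' := by
  obtain ⟨v, -, rfl⟩ := Finset.mem_image.1 hO
  obtain ⟨v', -, rfl⟩ := Finset.mem_image.1 hO'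
  simp only [Finset.mem_filter, Finset.mem_univ, true_and] at hu hu'
  ext x
  simp only [Finset.mem_filter, Finset.mem_univ, true_and]
  exact ⟨fun hx => (hu'.trans hu.symm).trans hx, fun hx => (hu.trans hu'.symm).trans hx⟩

lemma pow_mem_orbit (σ : Equiv.Perm V) (v : V) (k : ℕ) :
    (σ ^ k) v ∈ Finset.univ.filter fun u => σ.SameCycle v u := by
  simp only [Finset.mem_filter, Finset.mem_univ, true_and]
  exact ⟨(k : ℤ), by simp [zpow_natCast]⟩

lemma noOrbit_iff (σ : Equiv.Perm V) (S : Finset V) :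
    (∀ O ∈ cyclesOf σ, ¬ O ⊆ S) ↔ ∀ v : V, ∃ k : ℕ, (σ ^ k) v ∉ S := by
  constructor
  · intro hP v
    have h := hP _ (orbit_mem_cyclesOf σ v)
    rw [Finset.not_subset] at h
    obtain ⟨u, hu, huS⟩ := h
    simp only [Finset.mem_filter, Finset.mem_univ, true_and] at hu
    obtain ⟨i, -, -, hiu⟩ := Equiv.Perm.SameCycle.exists_pow_eq σ hu
    exact ⟨i, by rwa [hiu]⟩
  · intro h O hO hsub
    obtain ⟨v, -, rfl⟩ := Finset.mem_image.1 hO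
    obtain ⟨k, hk⟩ := h v
    exact hk (hsub (pow_mem_orbit σ v k))

lemma cyclesOf_disjoint {σ : Equiv.Perm V} {O O' : Finset V} (hO : O ∈ cyclesOf σ)
    (hO' : O' ∈ cyclesOf σ) (hne : O ≠ O') : Disjoint O O' := by
  rw [Finset.disjoint_left]
  intro u hu hu'
  exact hne (cyclesOf_eq_of_mem hO hO' hu hu')

lemma powerset_filter_eq {α : Type*} [DecidableEq α] (s : Finset α) (c : α → Prop)
    [DecidablePred c] :
    (s.filter c).powerset = s.powerset.filter fun J => ∀ x ∈ J, c x := by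
  ext J
  simp only [Finset.mem_powerset, Finset.mem_filter, Finset.subset_iff, Finset.mem_filter]
  constructor
  · intro h
    exact ⟨fun x hx => (h hx).1, fun x hx => (h hx).2⟩
  · rintro ⟨h1, h2⟩ x hx
    exact ⟨h1 hx, h2 x hx⟩

lemma sum_interval {B T : Finset V} (hBT : B ⊆ T) :
    ∑ S ∈ T.powerset.filter (fun S => B ⊆ S), (-1 : ℤ) ^ S.card
      = (-1) ^ B.card * (if T = B then 1 else 0) := by
  have h1 : ∑ S ∈ T.powerset.filter (fun S => B ⊆ S), (-1 : ℤ) ^ S.card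
      = ∑ S' ∈ (T \ B).powerset, (-1 : ℤ) ^ (S'.card + B.card) := by
    refine Finset.sum_nbij' (fun S => S \ B) (fun S' => S' ∪ B) ?_ ?_ ?_ ?_ ?_
    · intro S hS
      simp only [Finset.mem_filter, Finset.mem_powerset] at hS
      rw [Finset.mem_powerset]
      exact Finset.sdiff_subset_sdiff hS.1 Finset.Subset.rfl
    · intro S' hS'
      rw [Finset.mem_powerset] at hS'
      simp only [Finset.mem_filter, Finset.mem_powerset]
      constructor
      · exact Finset.union_subset (hS'.trans (Finset.sdiff_subset)) hBT
      · exact Finset.subset_union_right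
    · intro S hS
      simp only [Finset.mem_filter, Finset.mem_powerset] at hS
      exact Finset.sdiff_union_of_subset hS.2
    · intro S' hS'
      rw [Finset.mem_powerset] at hS'
      have hd : Disjoint S' B := Finset.disjoint_left.2 fun x hx hxB =>
        (Finset.mem_sdiff.1 (hS' hx)).2 hxB
      show (S' ∪ B) \ B = S'
      rw [Finset.union_sdiff_right, Finset.sdiff_eq_self_of_disjoint hd]
    · intro S hS
      simp only [Finset.mem_filter, Finset.mem_powerset] at hS
      have hc := Finset.card_sdiff_add_card_eq_card hS.2
      show (-1 : ℤ) ^ S.card = (-1) ^ ((S \ B).card + B.card)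
      rw [hc]
  rw [h1]
  have h2 : ∀ S' : Finset V, (-1 : ℤ) ^ (S'.card + B.card)
      = (-1 : ℤ) ^ B.card * (-1) ^ S'.card := by
    intro S'; rw [pow_add]; ring
  rw [Finset.sum_congr rfl fun S' _ => h2 S', ← Finset.mul_sum,
    Finset.sum_powerset_neg_one_pow_card]
  congr 1
  have : T \ B = ∅ ↔ T = B := by
    rw [Finset.sdiff_eq_empty_iff_subset]
    exact ⟨fun h => Finset.Subset.antisymm h hBT, fun h => h ▸ Finset.Subset.rfl⟩
  simp only [this]

lemma sum_lemma (σ : Equiv.Perm V) (T : Finset V) :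
    ∑ S ∈ T.powerset.filter (fun S => ∀ O ∈ cyclesOf σ, ¬ O ⊆ S), (-1 : ℤ) ^ S.card
      = if ∀ O ∈ cyclesOf σ, O ⊆ T ∨ ∀ u ∈ O, u ∉ T then
          (-1) ^ (((cyclesOf σ).filter (· ⊆ T)).card + T.card) else 0 := by
  set 𝒟 := (cyclesOf σ).filter (· ⊆ T) with h𝒟
  have step1 : ∑ S ∈ T.powerset.filter (fun S => ∀ O ∈ cyclesOf σ, ¬ O ⊆ S), (-1 : ℤ) ^ S.card
      = ∑ S ∈ T.powerset, ∑ J ∈ (𝒟.filter (· ⊆ S)).powerset,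
          (-1 : ℤ) ^ S.card * (-1) ^ J.card := by
    rw [Finset.sum_filter]
    refine Finset.sum_congr rfl ?_
    intro S hS
    rw [Finset.mem_powerset] at hS
    rw [← Finset.mul_sum, Finset.sum_powerset_neg_one_pow_card]
    by_cases hc : ∀ O ∈ cyclesOf σ, ¬ O ⊆ S
    · rw [if_pos hc, if_pos, mul_one]
      rw [Finset.filter_eq_empty_iff]
      intro O hO
      exact hc O (Finset.mem_filter.1 hO).1
    · rw [if_neg hc, if_neg, mul_zero]
      intro hemp
      apply hc
      intro O hO hOS
      have hmem : O ∈ 𝒟.filter (· ⊆ S) := by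
        rw [Finset.mem_filter, h𝒟, Finset.mem_filter]
        exact ⟨⟨hO, hOS.trans hS⟩, hOS⟩
      rw [hemp] at hmem
      exact absurd hmem (Finset.notMem_empty O)
  rw [step1]
  have step3 : ∑ S ∈ T.powerset, ∑ J ∈ (𝒟.filter (· ⊆ S)).powerset,
        (-1 : ℤ) ^ S.card * (-1) ^ J.card
      = ∑ J ∈ 𝒟.powerset, ∑ S ∈ T.powerset.filter (fun S => J.biUnion id ⊆ S),
          (-1 : ℤ) ^ S.card * (-1) ^ J.card := by
    have e1 : ∀ S ∈ T.powerset, ∑ J ∈ (𝒟.filter (· ⊆ S)).powerset,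
        (-1 : ℤ) ^ S.card * (-1) ^ J.card
        = ∑ J ∈ 𝒟.powerset.filter (fun J => J.biUnion id ⊆ S),
            (-1 : ℤ) ^ S.card * (-1) ^ J.card := by
      intro S _
      rw [powerset_filter_eq]
      refine Finset.sum_congr ?_ fun _ _ => rfl
      ext J
      simp [Finset.mem_filter, Finset.biUnion_subset]
    rw [Finset.sum_congr rfl e1]
    calc ∑ S ∈ T.powerset, ∑ J ∈ 𝒟.powerset.filter (fun J => J.biUnion id ⊆ S),
            (-1 : ℤ) ^ S.card * (-1) ^ J.card
        = ∑ S ∈ T.powerset, ∑ J ∈ 𝒟.powerset,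
            if J.biUnion id ⊆ S then (-1 : ℤ) ^ S.card * (-1) ^ J.card else 0 :=
          Finset.sum_congr rfl fun S _ => Finset.sum_filter _ _
      _ = ∑ J ∈ 𝒟.powerset, ∑ S ∈ T.powerset,
            if J.biUnion id ⊆ S then (-1 : ℤ) ^ S.card * (-1) ^ J.card else 0 :=
          Finset.sum_comm
      _ = ∑ J ∈ 𝒟.powerset, ∑ S ∈ T.powerset.filter (fun S => J.biUnion id ⊆ S),
            (-1 : ℤ) ^ S.card * (-1) ^ J.card :=
          Finset.sum_congr rfl fun J _ => (Finset.sum_filter _ _).symm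
  rw [step3]
  have hBsub : ∀ J ∈ 𝒟.powerset, J.biUnion id ⊆ T := by
    intro J hJ
    rw [Finset.mem_powerset] at hJ
    rw [Finset.biUnion_subset]
    intro O hO
    exact (Finset.mem_filter.1 (hJ hO)).2
  have step4 : ∀ J ∈ 𝒟.powerset,
      ∑ S ∈ T.powerset.filter (fun S => J.biUnion id ⊆ S),
          (-1 : ℤ) ^ S.card * (-1) ^ J.card
      = (-1 : ℤ) ^ J.card * ((-1) ^ (J.biUnion id).card * (if T = J.biUnion id then 1 else 0)) := by
    intro J hJ
    rw [← Finset.sum_mul, sum_interval (hBsub J hJ), mul_comm]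
  rw [Finset.sum_congr rfl step4]
  by_cases hmain : ∀ O ∈ cyclesOf σ, O ⊆ T ∨ ∀ u ∈ O, u ∉ T
  · rw [if_pos hmain]
    have hBD : 𝒟.biUnion id = T := by
      apply Finset.Subset.antisymm
      · rw [Finset.biUnion_subset]
        intro O hO
        exact (Finset.mem_filter.1 hO).2
      · intro u hu
        rcases hmain _ (orbit_mem_cyclesOf σ u) with hsub | hnot
        · rw [Finset.mem_biUnion]
          exact ⟨_, Finset.mem_filter.2 ⟨orbit_mem_cyclesOf σ u, hsub⟩, self_mem_orbit σ u⟩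
        · exact absurd hu (hnot u (self_mem_orbit σ u))
    rw [Finset.sum_eq_single 𝒟]
    · rw [if_pos hBD.symm, hBD, mul_one, ← pow_add]
    · intro J hJ hne
      rw [if_neg, mul_zero, mul_zero]
      intro hT
      apply hne
      rw [Finset.mem_powerset] at hJ
      refine Finset.Subset.antisymm hJ ?_
      intro O hO
      obtain ⟨u, hu⟩ := cyclesOf_nonempty (Finset.mem_filter.1 hO).1
      have huT : u ∈ T := (Finset.mem_filter.1 hO).2 hu
      rw [hT, Finset.mem_biUnion] at huT
      obtain ⟨O', hO', huO'⟩ := huT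
      have heq : O = O' := cyclesOf_eq_of_mem (Finset.mem_filter.1 hO).1
        (Finset.mem_filter.1 (hJ hO')).1 hu huO'
      rwa [heq]
    · intro habs
      exact absurd (Finset.mem_powerset.2 Finset.Subset.rfl) habs
  · rw [if_neg hmain]
    push_neg at hmain
    obtain ⟨O, hO, hOT, w, hwO, hwT⟩ := hmain
    apply Finset.sum_eq_zero
    intro J hJ
    rw [Finset.mem_powerset] at hJ
    rw [if_neg, mul_zero, mul_zero]
    intro hT
    have hwB : w ∈ J.biUnion id := hT ▸ hwT
    rw [Finset.mem_biUnion] at hwB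
    obtain ⟨O', hO', hwO'⟩ := hwB
    have heq : O = O' := cyclesOf_eq_of_mem hO (Finset.mem_filter.1 (hJ hO')).1 hwO hwO'
    exact hOT (heq ▸ (Finset.mem_filter.1 (hJ hO')).2)

end AuxOrbits

end AuxRB

/-- **Proposition (Grinberg–Stanley, Proposition 2.26).**
`∑_{F ⊆ A_σ ∩ A linear} (-1)^{|F|}` equals `(-1)^{φ(σ)}` if `σ ∈ S_V(D,D̄)`,
and `0` otherwise. -/
theorem signed_sum_of_linear_subsets (V : Type) [Fintype V] [DecidableEq V]
    (A : Set (V × V)) (σ : Equiv.Perm V) :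
    ∑ F ∈ Finset.univ.filter
        (fun F : Finset (V × V) =>
          (↑F : Set (V × V)) ⊆ ApermSet σ ∩ A ∧ IsLinear V (↑F : Set (V × V))),
      (-1 : ℤ) ^ F.card
      = if memSVDDbar A σ then (-1 : ℤ) ^ phi A σ else 0 := by
  classical
  set T : Finset V := Finset.univ.filter (fun v => (v, σ v) ∈ A) with hT
  have hmem : ∀ u : V, u ∈ T ↔ (u, σ u) ∈ A := by intro u; simp [hT]
  have hform : ∀ (F : Finset (V × V)), (↑F : Set (V × V)) ⊆ ApermSet σ ∩ A →
      ∀ b ∈ F, (b.1, σ b.1) = b := by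
    intro F hsub b hb
    obtain ⟨u, hu⟩ := (hsub hb).1
    rw [← hu]
  have hset : Finset.univ.filter
        (fun F : Finset (V × V) =>
          (↑F : Set (V × V)) ⊆ ApermSet σ ∩ A ∧ IsLinear V (↑F : Set (V × V)))
      = (T.powerset.filter (fun S => ∀ O ∈ cyclesOf σ, ¬ O ⊆ S)).image
          (fun S => S.image (fun v => (v, σ v))) := by
    ext F
    simp only [Finset.mem_filter, Finset.mem_univ, true_and, Finset.mem_image,
      Finset.mem_powerset]
    constructor
    · rintro ⟨hsub, hlin⟩
      have hFeq : (F.image Prod.fst).image (fun v => (v, σ v)) = F := by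
        ext a
        simp only [Finset.mem_image]
        constructor
        · rintro ⟨v, ⟨b, hb, rfl⟩, rfl⟩
          rw [hform F hsub b hb]; exact hb
        · intro ha
          exact ⟨a.1, ⟨a, ha, rfl⟩, hform F hsub a ha⟩
      refine ⟨F.image Prod.fst, ⟨?_, ?_⟩, hFeq⟩
      · intro v hv
        rw [Finset.mem_image] at hv
        obtain ⟨b, hb, rfl⟩ := hv
        rw [hmem]
        have h2 := (hsub hb).2
        rwa [← hform F hsub b hb] at h2
      · rw [← hFeq] at hlin
        exact (noOrbit_iff σ _).2 ((linear_iff σ _).1 hlin)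
    · rintro ⟨S, ⟨hST, hP⟩, rfl⟩
      refine ⟨?_, (linear_iff σ S).2 ((noOrbit_iff σ S).1 hP)⟩
      intro a ha
      simp only [Finset.coe_image, Set.mem_image, Finset.mem_coe] at ha
      obtain ⟨v, hv, rfl⟩ := ha
      exact ⟨⟨v, rfl⟩, (hmem v).1 (hST hv)⟩
  rw [hset, Finset.sum_image (fun x hx y hy hxy => by
    have h2 := congrArg (Finset.image Prod.fst) hxy
    rwa [Finset.image_image, Finset.image_image,
      show (Prod.fst ∘ fun v => (v, σ v)) = id from rfl, Finset.image_id,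
      Finset.image_id] at h2)]
  have hcards : ∀ S : Finset V, (S.image (fun v => (v, σ v))).card = S.card := by
    intro S
    exact Finset.card_image_of_injective _ (fun a b hab => congrArg Prod.fst hab)
  rw [Finset.sum_congr rfl (fun S _ => by rw [hcards S]), sum_lemma σ T]
  have hiff : memSVDDbar A σ ↔ (∀ O ∈ cyclesOf σ, O ⊆ T ∨ ∀ u ∈ O, u ∉ T) := by
    unfold memSVDDbar
    refine forall₂_congr fun O hO => or_congr ?_ ?_
    · rw [Finset.subset_iff]
      exact ⟨fun h u hu => (hmem u).2 (h u hu), fun h u hu => (hmem u).1 (h hu)⟩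
    · exact forall₂_congr fun u hu => not_congr (hmem u).symm
  by_cases hm : memSVDDbar A σ
  · have hmain := hiff.1 hm
    rw [if_pos hmain, if_pos hm]
    set 𝒟 := (cyclesOf σ).filter (· ⊆ T) with h𝒟
    have hBD : 𝒟.biUnion id = T := by
      apply Finset.Subset.antisymm
      · rw [Finset.biUnion_subset]
        intro O hO
        exact (Finset.mem_filter.1 hO).2
      · intro u hu
        rcases hmain _ (orbit_mem_cyclesOf σ u) with hsub | hnot
        · rw [Finset.mem_biUnion]
          exact ⟨_, Finset.mem_filter.2 ⟨orbit_mem_cyclesOf σ u, hsub⟩, self_mem_orbit σ u⟩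
        · exact absurd hu (hnot u (self_mem_orbit σ u))
    have hdisj : ∀ O ∈ 𝒟, ∀ O' ∈ 𝒟, O ≠ O' → Disjoint (id O) (id O') := by
      intro O hO O' hO' hne
      exact cyclesOf_disjoint (Finset.mem_filter.1 hO).1 (Finset.mem_filter.1 hO').1 hne
    have hcardsum : ∑ O ∈ 𝒟, O.card = T.card := by
      rw [← hBD, Finset.card_biUnion hdisj]
      rfl
    have hphi : phi A σ = ∑ O ∈ 𝒟, (O.card - 1) := by
      rw [phi]
      congr 1
      ext O
      simp only [Finset.mem_filter, h𝒟]
      refine and_congr_right fun hO => ?_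
      rw [Finset.subset_iff]
      exact ⟨fun h u hu => (hmem u).2 (h u hu), fun h u hu => (hmem u).1 (h hu)⟩
    rw [hphi]
    calc ((-1 : ℤ)) ^ (𝒟.card + T.card)
        = (-1 : ℤ) ^ (∑ O ∈ 𝒟, O.card) * (-1) ^ 𝒟.card := by
          rw [← pow_add, hcardsum, add_comm]
      _ = (∏ O ∈ 𝒟, (-1 : ℤ) ^ O.card) * (-1) ^ 𝒟.card := by
          rw [Finset.prod_pow_eq_pow_sum]
      _ = ∏ O ∈ 𝒟, ((-1 : ℤ) ^ O.card * (-1)) := by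
          rw [Finset.prod_mul_distrib, Finset.prod_const]
      _ = ∏ O ∈ 𝒟, ((-1 : ℤ) ^ (O.card - 1)) := by
          refine Finset.prod_congr rfl fun O hO => ?_
          have h1 : 1 ≤ O.card :=
            Finset.card_pos.2 (cyclesOf_nonempty (Finset.mem_filter.1 hO).1)
          have h2 : O.card = O.card - 1 + 1 := by omega
          have h3 : (-1 : ℤ) ^ O.card = (-1) ^ (O.card - 1) * (-1) := by
            conv_lhs => rw [h2]
            rw [pow_succ]
          rw [h3]
          ring
      _ = (-1 : ℤ) ^ (∑ O ∈ 𝒟, (O.card - 1)) := by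
          rw [Finset.prod_pow_eq_pow_sum]
  · rw [if_neg (fun hc => hm (hiff.2 hc)), if_neg hm]
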